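/- Let n ≥ 2 and let A be an n-by-n complex normal matrix (A* A = A A*). If λ and μ are any two distinct eigenvalues of A, then for every index k ∈ {1, …, n}, the field of values of the principal submatrix A_{(k)} has nonempty intersection with the closed segment [λ, μ]; in particular, F(A_{(k)}) meets every side of the polygon ∂F(A) = ∂ conv(σ(A)). -/

import Mathlib

open Matrix Complex

/-- The field of values (numerical range) of a complex matrix:
`F(A) = { x* A x : x* x = 1 }`. -/
def fov {n : ℕ} (A : Matrix (Fin n) (Fin n) ℂ) : Set ℂ :=
  {z | ∃ x : Fin n → ℂ, star x ⬝ᵥ x = 1 ∧ star x ⬝ᵥ A.mulVec x = z}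

/-- The principal submatrix `A_{(k)}` obtained by deleting the `k`-th row and column. -/
def subAt {n : ℕ} (A : Matrix (Fin (n + 1)) (Fin (n + 1)) ℂ) (k : Fin (n + 1)) :
    Matrix (Fin n) (Fin n) ℂ :=
  A.submatrix k.succAbove k.succAbove

/- ### Auxiliary lemmas -/

lemma exists_eigenvector' {m : ℕ} (A : Matrix (Fin m) (Fin m) ℂ) {μ : ℂ}
    (h : μ ∈ spectrum ℂ A) : ∃ u : Fin m → ℂ, u ≠ 0 ∧ A.mulVec u = μ • u := by
  rw [← AlgEquiv.spectrum_eq Matrix.toLinAlgEquiv',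
    ← Module.End.hasEigenvalue_iff_mem_spectrum] at h
  obtain ⟨u, hu⟩ := h.exists_hasEigenvector
  refine ⟨u, hu.2, ?_⟩
  have := hu.apply_eq_smul
  rwa [Matrix.toLinAlgEquiv'_apply] at this

lemma dot_self_eq {m : ℕ} (v : Fin m → ℂ) :
    star v ⬝ᵥ v = ((∑ i, Complex.normSq (v i) : ℝ) : ℂ) := by
  simp [dotProduct, Complex.normSq_eq_conj_mul_self]

lemma dot_self_pos {m : ℕ} {v : Fin m → ℂ} (hv : v ≠ 0) :
    0 < ∑ i, Complex.normSq (v i) := by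
  refine Finset.sum_pos' (fun i _ => Complex.normSq_nonneg _) ?_
  obtain ⟨i, hi⟩ := Function.ne_iff.mp hv
  exact ⟨i, Finset.mem_univ i, Complex.normSq_pos.mpr (by simpa using hi)⟩

lemma eq_zero_of_dot_self' {m : ℕ} {v : Fin m → ℂ} (h : star v ⬝ᵥ v = 0) : v = 0 := by
  by_contra hv
  have := dot_self_pos hv
  rw [dot_self_eq] at h
  exact this.ne' (by exact_mod_cast h)

lemma adjoint_eigen {m : ℕ} {A : Matrix (Fin m) (Fin m) ℂ}
    (hnormal : Aᴴ * A = A * Aᴴ) {μ : ℂ} {u : Fin m → ℂ} (hu : A.mulVec u = μ • u) :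
    Aᴴ.mulVec u = (starRingEnd ℂ μ) • u := by
  set B : Matrix (Fin m) (Fin m) ℂ := A - μ • 1 with hBdef
  have hBu : B.mulVec u = 0 := by
    simp [hBdef, sub_mulVec, hu, smul_mulVec]
  have hcB : Bᴴ = Aᴴ - (starRingEnd ℂ μ) • 1 := by
    simp [hBdef, conjTranspose_smul]
  have hB : Bᴴ * B = B * Bᴴ := by
    rw [hcB, hBdef]
    simp only [Matrix.mul_sub, Matrix.sub_mul, Matrix.smul_mul, Matrix.mul_smul,
      Matrix.one_mul, Matrix.mul_one, hnormal, smul_smul, mul_comm]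
    module
  have key : star (Bᴴ.mulVec u) ⬝ᵥ (Bᴴ.mulVec u) = 0 := by
    rw [star_mulVec, conjTranspose_conjTranspose, ← dotProduct_mulVec,
      mulVec_mulVec, ← hB, ← mulVec_mulVec, hBu, mulVec_zero, dotProduct_zero]
  have h0 : Bᴴ.mulVec u = 0 := eq_zero_of_dot_self' key
  rw [hcB, sub_mulVec, smul_mulVec, one_mulVec] at h0
  linear_combination (norm := module) h0

lemma orth_of_normal {m : ℕ} {A : Matrix (Fin m) (Fin m) ℂ} (hnormal : Aᴴ * A = A * Aᴴ)
    {lam mu : ℂ} {u v : Fin m → ℂ} (hu : A.mulVec u = lam • u) (hv : A.mulVec v = mu • v)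
    (hne : lam ≠ mu) : star u ⬝ᵥ v = 0 := by
  have hAu := adjoint_eigen hnormal hu
  have h1 : star u ⬝ᵥ A.mulVec v = mu * (star u ⬝ᵥ v) := by
    rw [hv, dotProduct_smul, smul_eq_mul]
  have hvAu : star u ᵥ* A = lam • star u := by
    have h := congrArg star hAu
    rw [star_mulVec, conjTranspose_conjTranspose] at h
    rw [h]; ext i; simp [Complex.star_def]
  have h2 : star u ⬝ᵥ A.mulVec v = lam * (star u ⬝ᵥ v) := by
    rw [dotProduct_mulVec, hvAu, smul_dotProduct, smul_eq_mul]
  have h3 : (mu - lam) * (star u ⬝ᵥ v) = 0 := by rw [sub_mul, ← h1, ← h2, sub_self]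
  exact (mul_eq_zero.mp h3).resolve_left (sub_ne_zero.mpr (Ne.symm hne))

lemma mem_fov_of_zero {n : ℕ} (A : Matrix (Fin (n+1)) (Fin (n+1)) ℂ) (k : Fin (n+1))
    {w : Fin (n+1) → ℂ} (hw : w ≠ 0) (hk : w k = 0) :
    (star w ⬝ᵥ w)⁻¹ * (star w ⬝ᵥ A.mulVec w) ∈ fov (subAt A k) := by
  set c : ℝ := ∑ i, Complex.normSq (w i) with hc
  have hcpos : 0 < c := dot_self_pos hw
  set r : ℝ := Real.sqrt c with hr
  have hrpos : 0 < r := Real.sqrt_pos.mpr hcpos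
  have hr2 : (r : ℂ) * (r : ℂ) = (c : ℂ) := by
    rw [← Complex.ofReal_mul, Real.mul_self_sqrt hcpos.le]
  refine ⟨fun i => (r : ℂ)⁻¹ * w (k.succAbove i), ?_, ?_⟩
  · have : star (fun i => (r : ℂ)⁻¹ * w (k.succAbove i)) ⬝ᵥ
        (fun i => (r : ℂ)⁻¹ * w (k.succAbove i))
        = (r : ℂ)⁻¹ * (r : ℂ)⁻¹ * ∑ i : Fin n, (starRingEnd ℂ) (w (k.succAbove i)) * w (k.succAbove i) := by
      simp [dotProduct, Finset.mul_sum, Pi.star_apply, Complex.star_def, map_inv₀]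
      ring_nf
    rw [this]
    have hsum : ∑ i : Fin n, (starRingEnd ℂ) (w (k.succAbove i)) * w (k.succAbove i)
        = (c : ℂ) := by
      have h1 : ∑ j : Fin (n+1), (starRingEnd ℂ) (w j) * w j
          = (starRingEnd ℂ) (w k) * w k
            + ∑ i : Fin n, (starRingEnd ℂ) (w (k.succAbove i)) * w (k.succAbove i) :=
        Fin.sum_univ_succAbove _ k
      have h2 : ∑ j : Fin (n+1), (starRingEnd ℂ) (w j) * w j = (c : ℂ) := by
        push_cast [hc]
        exact Finset.sum_congr rfl fun j _ => (Complex.normSq_eq_conj_mul_self).symm ▸ rfl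
      rw [h2, hk] at h1
      simpa using h1.symm
    rw [hsum]
    rw [← hr2]
    have : (r:ℂ) ≠ 0 := by exact_mod_cast hrpos.ne'
    field_simp
  · have hrne : (r:ℂ) ≠ 0 := by exact_mod_cast hrpos.ne'
    have hAw : ∀ j : Fin n,
        (subAt A k).mulVec (fun i => (r : ℂ)⁻¹ * w (k.succAbove i)) j
          = (r : ℂ)⁻¹ * (A.mulVec w) (k.succAbove j) := by
      intro j
      have hsplit : (A.mulVec w) (k.succAbove j)
          = A (k.succAbove j) k * w k
            + ∑ i : Fin n, A (k.succAbove j) (k.succAbove i) * w (k.succAbove i) :=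
        Fin.sum_univ_succAbove (fun l => A (k.succAbove j) l * w l) k
      rw [hsplit, hk, mul_zero, zero_add, Finset.mul_sum]
      simp [subAt, Matrix.mulVec, dotProduct]
      exact Finset.sum_congr rfl fun i _ => by ring
    have hdot : (star fun i => (r : ℂ)⁻¹ * w (k.succAbove i)) ⬝ᵥ
        (subAt A k).mulVec (fun i => (r : ℂ)⁻¹ * w (k.succAbove i))
        = (r : ℂ)⁻¹ * (r : ℂ)⁻¹
          * ∑ j : Fin n, (starRingEnd ℂ) (w (k.succAbove j)) * (A.mulVec w) (k.succAbove j) := by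
      simp only [dotProduct, Pi.star_apply, Complex.star_def, hAw, _root_.map_mul, map_inv₀,
        Complex.conj_ofReal, Finset.mul_sum]
      exact Finset.sum_congr rfl fun j _ => by ring
    have hsum2 : ∑ j : Fin n, (starRingEnd ℂ) (w (k.succAbove j)) * (A.mulVec w) (k.succAbove j)
        = star w ⬝ᵥ A.mulVec w := by
      have := Fin.sum_univ_succAbove (fun l => (starRingEnd ℂ) (w l) * (A.mulVec w) l) k
      rw [hk] at this
      simp only [map_zero, zero_mul, zero_add] at this
      rw [← this]
      rfl
    rw [hdot, hsum2, dot_self_eq, ← hr2]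
    field_simp

lemma combo {m : ℕ} {A : Matrix (Fin m) (Fin m) ℂ} {lam mu : ℂ} {u v : Fin m → ℂ}
    (hu : A.mulVec u = lam • u) (hv : A.mulVec v = mu • v)
    (huv : star u ⬝ᵥ v = 0) (hvu : star v ⬝ᵥ u = 0) (α β : ℂ) :
    star (α • u + β • v) ⬝ᵥ (α • u + β • v)
      = ((Complex.normSq α * ∑ i, Complex.normSq (u i)
          + Complex.normSq β * ∑ i, Complex.normSq (v i) : ℝ) : ℂ) ∧
    star (α • u + β • v) ⬝ᵥ A.mulVec (α • u + β • v)
      = ((Complex.normSq α * ∑ i, Complex.normSq (u i) : ℝ) : ℂ) * lam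
        + ((Complex.normSq β * ∑ i, Complex.normSq (v i) : ℝ) : ℂ) * mu := by
  have hs : star (α • u + β • v)
      = (starRingEnd ℂ α) • star u + (starRingEnd ℂ β) • star v := by
    ext i; simp [Complex.star_def, mul_comm]
  have hA : A.mulVec (α • u + β • v) = α • (lam • u) + β • (mu • v) := by
    rw [mulVec_add, mulVec_smul, mulVec_smul, hu, hv]
  constructor
  · rw [hs, add_dotProduct, smul_dotProduct, smul_dotProduct, dotProduct_add, dotProduct_add,
      dotProduct_smul, dotProduct_smul, dotProduct_smul, dotProduct_smul, huv, hvu,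
      dot_self_eq u, dot_self_eq v]
    push_cast [Complex.normSq_eq_conj_mul_self]
    simp only [smul_eq_mul]
    ring
  · rw [hA, hs, add_dotProduct, smul_dotProduct, smul_dotProduct, dotProduct_add, dotProduct_add,
      dotProduct_smul, dotProduct_smul, dotProduct_smul, dotProduct_smul,
      dotProduct_smul, dotProduct_smul, dotProduct_smul, dotProduct_smul, huv, hvu,
      dot_self_eq u, dot_self_eq v]
    push_cast [Complex.normSq_eq_conj_mul_self]
    simp only [smul_eq_mul]
    ring

/-- If `A` is an `(n+1)`-by-`(n+1)` normal matrix (`n + 1 ≥ 2`) and `λ ≠ μ` are eigenvalues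
of `A`, then for every `k` the field of values of the principal submatrix `A_{(k)}` meets the
closed segment `[λ, μ]`; in particular it meets every side of the polygon `∂F(A)`. -/
theorem fov_deleted_meets_segment_of_normal {n : ℕ} (hn : 1 ≤ n)
    (A : Matrix (Fin (n + 1)) (Fin (n + 1)) ℂ)
    (hnormal : Aᴴ * A = A * Aᴴ)
    (lam mu : ℂ) (hlam : lam ∈ spectrum ℂ A) (hmu : mu ∈ spectrum ℂ A) (hne : lam ≠ mu) :
    ∀ k : Fin (n + 1), (fov (subAt A k) ∩ segment ℝ lam mu).Nonempty := by
  intro k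
  obtain ⟨u, hu0, hu⟩ := exists_eigenvector' A hlam
  obtain ⟨v, hv0, hv⟩ := exists_eigenvector' A hmu
  have huv : star u ⬝ᵥ v = 0 := orth_of_normal hnormal hu hv hne
  have hvu : star v ⬝ᵥ u = 0 := by
    rw [star_dotProduct, huv, star_zero]
  have hcu : (0:ℝ) < ∑ i, Complex.normSq (u i) := dot_self_pos hu0
  obtain ⟨α, β, hwk, hwne⟩ :
      ∃ α β : ℂ, (α • u + β • v) k = 0 ∧ α • u + β • v ≠ 0 := by
    by_cases h : u k = 0
    · exact ⟨1, 0, by simp [h], by simpa using hu0⟩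
    · refine ⟨v k, -(u k), by simp [Pi.add_apply]; ring, ?_⟩
      intro hw
      have h1 : star u ⬝ᵥ (v k • u + -(u k) • v) = v k * (star u ⬝ᵥ u) := by
        rw [dotProduct_add, dotProduct_smul, dotProduct_smul, huv, smul_eq_mul,
          smul_eq_mul, mul_zero, add_zero]
      rw [hw, dotProduct_zero] at h1
      have huu : star u ⬝ᵥ u ≠ 0 := by
        rw [dot_self_eq]
        exact_mod_cast hcu.ne'
      have hvk : v k = 0 := by
        rcases mul_eq_zero.mp h1.symm with h' | h'
        · exact h'
        · exact absurd h' huu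
      rw [hvk, zero_smul, zero_add] at hw
      rcases smul_eq_zero.mp hw with h' | h'
      · exact h (neg_eq_zero.mp h')
      · exact hv0 h'
  set w : Fin (n+1) → ℂ := α • u + β • v with hwdef
  obtain ⟨hww, hAww⟩ := combo hu hv huv hvu α β
  set a : ℝ := Complex.normSq α * ∑ i, Complex.normSq (u i) with ha
  set b : ℝ := Complex.normSq β * ∑ i, Complex.normSq (v i) with hb
  have ha0 : 0 ≤ a := mul_nonneg (Complex.normSq_nonneg _)
    (Finset.sum_nonneg fun i _ => Complex.normSq_nonneg _)
  have hb0 : 0 ≤ b := mul_nonneg (Complex.normSq_nonneg _)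
    (Finset.sum_nonneg fun i _ => Complex.normSq_nonneg _)
  have hab : 0 < a + b := by
    have h1 : ((a + b : ℝ) : ℂ) = ((∑ i, Complex.normSq (w i) : ℝ) : ℂ) := by
      rw [← dot_self_eq, ← hww]
    have h2 : a + b = ∑ i, Complex.normSq (w i) := by exact_mod_cast h1
    rw [h2]
    exact dot_self_pos hwne
  have habC : ((a + b : ℝ) : ℂ) ≠ 0 := by exact_mod_cast hab.ne'
  refine ⟨(star w ⬝ᵥ w)⁻¹ * (star w ⬝ᵥ A.mulVec w),
    mem_fov_of_zero A k hwne hwk, a / (a + b), b / (a + b),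
    div_nonneg ha0 hab.le, div_nonneg hb0 hab.le, by field_simp, ?_⟩
  rw [Complex.real_smul, Complex.real_smul, hww, hAww]
  push_cast
  field_simp
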